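/- Let a, σ > 0, b ≥ 0, τ > 0, T ∈ ℝ, let w ∈ [0, (k(0)−a)/σ²) where k(x) := √(a² + 2(1+b·x)·σ²), and let (φⱼ)ⱼ≥₀ be the solution of the recursive delayed Riccati system with final datum w. Let c ≥ 0 be any constant and define the sequence w̄₀ := max((k(0)−a)/σ², c) and w̄ⱼ₊₁ := max(w̄ⱼ, (k(w̄ⱼ)−a)/σ²) for j ≥ 0. Then for every j ≥ 0 and every t ∈ [T−(j+1)τ, T−jτ]: w ≤ Φ(t,T;w,0) ≤ φⱼ(t) ≤ Φ(t, T−jτ; w̄ⱼ, w̄ⱼ) ≤ w̄ⱼ₊₁. -/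

import Mathlib

open Real Set Filter Topology



/-- k(x) := √(a² + 2(1+b·x)·σ²). -/
noncomputable def kfun (a b σ x : ℝ) : ℝ := Real.sqrt (a ^ 2 + 2 * (1 + b * x) * σ ^ 2)

/-- The explicit solution Φ(t,T;ψ,γ) of the Riccati equation with constant coefficient γ. -/
noncomputable def Phi (a b σ ψ γ T t : ℝ) : ℝ :=
  ((kfun a b σ γ - a) / σ ^ 2 * (ψ + (a + kfun a b σ γ) / σ ^ 2) +
      (a + kfun a b σ γ) / σ ^ 2 * (ψ + (a - kfun a b σ γ) / σ ^ 2) *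
        Real.exp (-(kfun a b σ γ) * (T - t))) /
    ((ψ + (a + kfun a b σ γ) / σ ^ 2) +
      ((kfun a b σ γ - a) / σ ^ 2 - ψ) * Real.exp (-(kfun a b σ γ) * (T - t)))

/-- The domain [T−(j+1)τ, T−jτ] of the j-th component of the recursive delayed
Riccati system. -/
def riccatiDom (T τ : ℝ) (j : ℕ) : Set ℝ :=
  Set.Icc (T - ((j : ℝ) + 1) * τ) (T - (j : ℝ) * τ)

/-- The recursive delayed Riccati system with delay τ, horizon T and final datum w. -/
def DelayedRiccatiSol (a b σ τ T w : ℝ) (φ : ℕ → ℝ → ℝ) : Prop :=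
  φ 0 T = w ∧
  (∀ t ∈ riccatiDom T τ 0, HasDerivWithinAt (φ 0)
    (σ ^ 2 / 2 * (φ 0 t) ^ 2 + a * φ 0 t - 1) (riccatiDom T τ 0) t) ∧
  (∀ j : ℕ, φ (j + 1) (T - ((j : ℝ) + 1) * τ) = φ j (T - ((j : ℝ) + 1) * τ)) ∧
  (∀ j : ℕ, ∀ t ∈ riccatiDom T τ (j + 1), HasDerivWithinAt (φ (j + 1))
    (σ ^ 2 / 2 * (φ (j + 1) t) ^ 2 + a * φ (j + 1) t - 1 - b * φ j (t + τ))
    (riccatiDom T τ (j + 1)) t)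


open Real Set Filter Topology

lemma gronwall_nonpos {f f' : ℝ → ℝ} {a b K : ℝ}
    (hcont : ContinuousOn f (Icc a b))
    (hderiv : ∀ x ∈ Ico a b, HasDerivWithinAt f (f' x) (Icc a b) x)
    (hbound : ∀ x ∈ Ico a b, 0 ≤ f x → f' x ≤ K * f x)
    (hfa : f a ≤ 0) : ∀ x ∈ Icc a b, f x ≤ 0 := by
  set g : ℝ → ℝ := fun x => max (f x) 0 with hg
  set G : ℝ → ℝ := fun x => if 0 < f x then f' x else 0 with hG
  have key : ∀ x ∈ Icc a b, g x ≤ gronwallBound 0 K 0 (x - a) := by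
    apply le_gronwallBound_of_liminf_deriv_right_le (f' := G)
    · exact fun x hx => (hcont x hx).max continuousWithinAt_const
    · intro x hx r hr
      have hxb : x < b := hx.2
      have hmem : Icc a b ∈ 𝓝[>] x := by
        rw [mem_nhdsWithin]
        exact ⟨Iio b, isOpen_Iio, hxb,
          fun z hz => ⟨hx.1.trans hz.2.le, hz.1.le⟩⟩
      have hd : HasDerivWithinAt f (f' x) (Ioi x) x :=
        (hderiv x hx).mono_of_mem_nhdsWithin hmem
      have hcW : ContinuousWithinAt f (Ioi x) x :=
        (hcont x (Ico_subset_Icc_self hx)).mono_of_mem_nhdsWithin hmem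
      rcases lt_trichotomy (f x) 0 with hfx | hfx | hfx
      · -- f x < 0
        have hG0 : G x = 0 := by simp [hG, not_lt.2 hfx.le]
        rw [hG0] at hr
        have hev : ∀ᶠ z in 𝓝[>] x, f z < 0 := hcW.tendsto.eventually_lt_const hfx
        refine (hev.mono fun z hz => ?_).frequently
        have hgz : g z = 0 := max_eq_right hz.le
        have hgx : g x = 0 := max_eq_right hfx.le
        rw [hgz, hgx]; simpa using hr
      · -- f x = 0
        have hG0 : G x = 0 := by simp [hG, hfx]
        rw [hG0] at hr
        have hf'le : f' x ≤ 0 := by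
          have := hbound x hx hfx.ge
          rwa [hfx, mul_zero] at this
        have hslope : ∀ᶠ z in 𝓝[>] x, slope f x z < r :=
          hd.limsup_slope_le' (lt_irrefl x) (lt_of_le_of_lt hf'le hr)
        refine ((hslope.and (eventually_mem_nhdsWithin)).mono fun z ⟨hz1, hz2⟩ => ?_).frequently
        have hzx : (0:ℝ) < z - x := sub_pos.2 hz2
        have hgx : g x = 0 := by simp [hg, hfx]
        have : (z - x)⁻¹ * (g z - g x) = max ((z - x)⁻¹ * (f z - f x)) 0 := by
          rw [hgx, hfx, hg]
          simp only [sub_zero]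
          rw [mul_max_of_nonneg _ _ (inv_nonneg.2 hzx.le), mul_zero]
        rw [this]
        have hs : (z - x)⁻¹ * (f z - f x) < r := by
          have := hz1; rwa [slope_def_field, div_eq_inv_mul] at this
        exact max_lt hs hr
      · -- f x > 0
        have hGx : G x = f' x := by simp [hG, hfx]
        rw [hGx] at hr
        have hslope : ∀ᶠ z in 𝓝[>] x, slope f x z < r :=
          hd.limsup_slope_le' (lt_irrefl x) hr
        have hev : ∀ᶠ z in 𝓝[>] x, 0 < f z := hcW.tendsto.eventually_const_lt hfx
        refine ((hslope.and hev).mono fun z ⟨hz1, hz2⟩ => ?_).frequently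
        have hgz : g z = f z := max_eq_left hz2.le
        have hgx : g x = f x := max_eq_left hfx.le
        rw [hgz, hgx]
        rwa [slope_def_field, div_eq_inv_mul] at hz1
    · simpa [hg] using hfa
    · intro x hx
      by_cases h : 0 < f x
      · have hgx : g x = f x := max_eq_left h.le
        simp only [hG, if_pos h, hgx, add_zero]
        exact hbound x hx h.le
      · simp only [hG, if_neg h, add_zero]
        have : g x = 0 := max_eq_right (not_lt.1 h)
        rw [this, mul_zero]
  intro x hx
  have := key x hx
  rw [gronwallBound_ε0_δ0] at this
  exact le_trans (le_max_left _ _) this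

lemma comparison_backward {f f' : ℝ → ℝ} {s₀ s₁ K : ℝ}
    (hderiv : ∀ t ∈ Icc s₀ s₁, HasDerivWithinAt f (f' t) (Icc s₀ s₁) t)
    (hbound : ∀ t ∈ Icc s₀ s₁, 0 ≤ f t → -K * f t ≤ f' t)
    (hfb : f s₁ ≤ 0) : ∀ t ∈ Icc s₀ s₁, f t ≤ 0 := by
  set σ : ℝ → ℝ := fun x => s₀ + s₁ - x with hσ
  have hσmem : ∀ x ∈ Icc s₀ s₁, σ x ∈ Icc s₀ s₁ := by
    intro x hx; exact ⟨by simp [hσ]; linarith [hx.2], by simp [hσ]; linarith [hx.1]⟩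
  have hcont : ContinuousOn f (Icc s₀ s₁) :=
    fun x hx => (hderiv x hx).continuousWithinAt
  have hgd : ∀ x ∈ Icc s₀ s₁, HasDerivWithinAt (fun x => f (σ x)) (-(f' (σ x))) (Icc s₀ s₁) x := by
    intro x hx
    have h1 : HasDerivWithinAt σ (-1) (Icc s₀ s₁) x := by
      simpa using ((hasDerivWithinAt_id x (Icc s₀ s₁)).const_sub (s₀ + s₁))
    have := (hderiv (σ x) (hσmem x hx)).comp x h1 (fun z hz => hσmem z hz)
    simpa [mul_comm, Function.comp_def] using this
  have key := gronwall_nonpos (f := fun x => f (σ x)) (f' := fun x => -(f' (σ x)))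
    (a := s₀) (b := s₁) (K := K)
    (fun x hx => (hcont (σ x) (hσmem x hx)).comp
      ((continuous_const.sub continuous_id).continuousWithinAt) (fun z hz => hσmem z hz))
    (fun x hx => hgd x (Ico_subset_Icc_self hx))
    (fun x hx hfx => by
      have h1 := hbound (σ x) (hσmem x (Ico_subset_Icc_self hx)) hfx
      nlinarith)
    (by simpa [hσ] using hfb)
  intro t ht
  have hσt : σ (σ t) = t := by simp [hσ]
  have h := key (σ t) (hσmem t ht)
  rwa [hσt] at h


section PhiLemmas
variable {a b σ ψ γ T t : ℝ}

lemma kfun_sq (ha : 0 < a) (hσ : 0 < σ) (hb : 0 ≤ b) (hγ : 0 ≤ γ) :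
    (kfun a b σ γ) ^ 2 = a ^ 2 + 2 * (1 + b * γ) * σ ^ 2 :=
  Real.sq_sqrt (by nlinarith [mul_nonneg hb hγ, sq_nonneg a, sq_nonneg σ, mul_nonneg (mul_nonneg hb hγ) (sq_nonneg σ)])

lemma kfun_gt (ha : 0 < a) (hσ : 0 < σ) (hb : 0 ≤ b) (hγ : 0 ≤ γ) :
    a < kfun a b σ γ := by
  have h1 : a = Real.sqrt (a ^ 2) := (Real.sqrt_sq ha.le).symm
  rw [h1, kfun]
  apply Real.sqrt_lt_sqrt (sq_nonneg a)
  nlinarith [mul_nonneg (mul_nonneg hb hγ) (sq_nonneg σ)]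

lemma kfun_pos (ha : 0 < a) (hσ : 0 < σ) (hb : 0 ≤ b) (hγ : 0 ≤ γ) :
    0 < kfun a b σ γ := ha.trans (kfun_gt ha hσ hb hγ)

lemma phi_denom_pos (ha : 0 < a) (hσ : 0 < σ) (hb : 0 ≤ b) (hγ : 0 ≤ γ) (hψ : 0 ≤ ψ)
    (ht : t ≤ T) :
    0 < (ψ + (a + kfun a b σ γ) / σ ^ 2) +
      ((kfun a b σ γ - a) / σ ^ 2 - ψ) * Real.exp (-(kfun a b σ γ) * (T - t)) := by
  set k := kfun a b σ γ with hk
  have hka : a < k := kfun_gt ha hσ hb hγ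
  have hσ2 : (0:ℝ) < σ ^ 2 := by positivity
  have hA : 0 < (k - a) / σ ^ 2 := div_pos (sub_pos.2 hka) hσ2
  have hB : 0 < (a + k) / σ ^ 2 := div_pos (by linarith) hσ2
  have hE : 0 < Real.exp (-k * (T - t)) := Real.exp_pos _
  have hE1 : Real.exp (-k * (T - t)) ≤ 1 := by
    rw [Real.exp_le_one_iff]
    have : 0 < k := ha.trans hka
    nlinarith
  set E := Real.exp (-k * (T - t))
  nlinarith [mul_nonneg hψ (sub_nonneg.2 hE1), mul_pos hA hE]


lemma riccati_algebra {a k σ ψ E N D : ℝ} (hσ2 : σ ^ 2 ≠ 0) (hD : D ≠ 0)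
    (hN : N = (k - a) / σ ^ 2 * (ψ + (a + k) / σ ^ 2) +
      (a + k) / σ ^ 2 * (ψ + (a - k) / σ ^ 2) * E)
    (hD' : D = (ψ + (a + k) / σ ^ 2) + ((k - a) / σ ^ 2 - ψ) * E) :
    σ ^ 2 / 2 * (N / D) ^ 2 + a * (N / D) - (k ^ 2 - a ^ 2) / (2 * σ ^ 2) =
      ((a + k) / σ ^ 2 * (ψ + (a - k) / σ ^ 2) * (k * E) * D -
        N * (((k - a) / σ ^ 2 - ψ) * (k * E))) / D ^ 2 := by
  have h2 : (2 : ℝ) ≠ 0 := two_ne_zero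
  have hσ : σ ≠ 0 := fun h => hσ2 (by simp [h])
  field_simp
  rw [hN, hD']
  field_simp
  ring

set_option maxHeartbeats 1600000 in
lemma phi_hasDerivAt (ha : 0 < a) (hσ : 0 < σ) (hb : 0 ≤ b) (hγ : 0 ≤ γ) (hψ : 0 ≤ ψ)
    (ht : t ≤ T) :
    HasDerivAt (fun s => Phi a b σ ψ γ T s)
      (σ ^ 2 / 2 * (Phi a b σ ψ γ T t) ^ 2 + a * Phi a b σ ψ γ T t - (1 + b * γ)) t := by
  obtain ⟨k, hkk⟩ : ∃ k, kfun a b σ γ = k := ⟨_, rfl⟩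
  have hk2 : k ^ 2 = a ^ 2 + 2 * (1 + b * γ) * σ ^ 2 := hkk ▸ kfun_sq ha hσ hb hγ
  have hkpos : 0 < k := hkk ▸ kfun_pos ha hσ hb hγ
  have hσ2 : (σ:ℝ) ^ 2 ≠ 0 := by positivity
  have hDpos := phi_denom_pos (T := T) (t := t) ha hσ hb hγ hψ ht
  rw [hkk] at hDpos
  have hD0 : (ψ + (a + k) / σ ^ 2) + ((k - a) / σ ^ 2 - ψ) * Real.exp (-k * (T - t)) ≠ 0 :=
    ne_of_gt hDpos
  have hEd : HasDerivAt (fun s => Real.exp (-k * (T - s))) (k * Real.exp (-k * (T - t))) t := by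
    have h1 : HasDerivAt (fun s : ℝ => -k * (T - s)) k t := by
      simpa using ((hasDerivAt_id t).const_sub T).const_mul (-k)
    simpa [mul_comm] using h1.exp
  have hN : HasDerivAt (fun s => (k - a) / σ ^ 2 * (ψ + (a + k) / σ ^ 2) +
      (a + k) / σ ^ 2 * (ψ + (a - k) / σ ^ 2) * Real.exp (-k * (T - s)))
      ((a + k) / σ ^ 2 * (ψ + (a - k) / σ ^ 2) * (k * Real.exp (-k * (T - t)))) t :=
    ((hEd.const_mul _).const_add _)
  have hD : HasDerivAt (fun s => (ψ + (a + k) / σ ^ 2) +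
      ((k - a) / σ ^ 2 - ψ) * Real.exp (-k * (T - s)))
      (((k - a) / σ ^ 2 - ψ) * (k * Real.exp (-k * (T - t)))) t :=
    ((hEd.const_mul _).const_add _)
  have hq := hN.div hD hD0
  have hPhi : (fun s => Phi a b σ ψ γ T s) = fun s =>
      ((k - a) / σ ^ 2 * (ψ + (a + k) / σ ^ 2) +
        (a + k) / σ ^ 2 * (ψ + (a - k) / σ ^ 2) * Real.exp (-k * (T - s))) /
      ((ψ + (a + k) / σ ^ 2) + ((k - a) / σ ^ 2 - ψ) * Real.exp (-k * (T - s))) := by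
    funext s; rw [Phi, hkk]
  have hPhit : Phi a b σ ψ γ T t =
      ((k - a) / σ ^ 2 * (ψ + (a + k) / σ ^ 2) +
        (a + k) / σ ^ 2 * (ψ + (a - k) / σ ^ 2) * Real.exp (-k * (T - t))) /
      ((ψ + (a + k) / σ ^ 2) + ((k - a) / σ ^ 2 - ψ) * Real.exp (-k * (T - t))) := by
    rw [Phi, hkk]
  rw [hPhi, hPhit]
  refine hq.congr_deriv (Eq.symm ?_)
  have hbγ : 1 + b * γ = (k ^ 2 - a ^ 2) / (2 * σ ^ 2) := by
    rw [hk2]; field_simp; ring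
  rw [hbγ]
  exact riccati_algebra hσ2 hD0 rfl rfl

lemma phi_at_T (ha : 0 < a) (hσ : 0 < σ) (hb : 0 ≤ b) (hγ : 0 ≤ γ) :
    Phi a b σ ψ γ T T = ψ := by
  obtain ⟨k, hkk⟩ : ∃ k, kfun a b σ γ = k := ⟨_, rfl⟩
  have hkpos : 0 < k := hkk ▸ kfun_pos ha hσ hb hγ
  have hσ2 : (0:ℝ) < σ ^ 2 := by positivity
  rw [Phi, hkk, sub_self, mul_zero, Real.exp_zero]
  have hden : ψ + (a + k) / σ ^ 2 + ((k - a) / σ ^ 2 - ψ) * 1 = 2 * k / σ ^ 2 := by ring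
  rw [hden, div_eq_iff (by positivity : 2 * k / σ ^ 2 ≠ 0)]
  field_simp
  ring

lemma psi_le_phi (ha : 0 < a) (hσ : 0 < σ) (hb : 0 ≤ b) (hγ : 0 ≤ γ) (hψ : 0 ≤ ψ)
    (hψA : ψ ≤ (kfun a b σ γ - a) / σ ^ 2) (ht : t ≤ T) :
    ψ ≤ Phi a b σ ψ γ T t := by
  have hDpos := phi_denom_pos (T := T) (t := t) ha hσ hb hγ hψ ht
  have hka : a < kfun a b σ γ := kfun_gt ha hσ hb hγ
  have hσ2 : (0:ℝ) < σ ^ 2 := by positivity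
  have hB : 0 < (a + kfun a b σ γ) / σ ^ 2 := div_pos (by linarith) hσ2
  have hE : 0 < Real.exp (-(kfun a b σ γ) * (T - t)) := Real.exp_pos _
  have hE1 : Real.exp (-(kfun a b σ γ) * (T - t)) ≤ 1 := by
    rw [Real.exp_le_one_iff]
    nlinarith [ha.trans hka]
  obtain ⟨k, hkk⟩ : ∃ k, kfun a b σ γ = k := ⟨_, rfl⟩
  rw [hkk] at hDpos hψA hka hB hE hE1
  rw [Phi, hkk, le_div_iff₀ hDpos]
  set E := Real.exp (-k * (T - t)) with hEdef
  have hid : ((k - a) / σ ^ 2 * (ψ + (a + k) / σ ^ 2) +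
      (a + k) / σ ^ 2 * (ψ + (a - k) / σ ^ 2) * E) -
      ψ * ((ψ + (a + k) / σ ^ 2) + ((k - a) / σ ^ 2 - ψ) * E) =
      ((k - a) / σ ^ 2 - ψ) * (ψ + (a + k) / σ ^ 2) * (1 - E) := by ring
  nlinarith [mul_nonneg (mul_nonneg (sub_nonneg.2 hψA) (by linarith : (0:ℝ) ≤ ψ + (a + k) / σ ^ 2)) (by linarith : (0:ℝ) ≤ 1 - E)]

lemma phi_le_max (ha : 0 < a) (hσ : 0 < σ) (hb : 0 ≤ b) (hγ : 0 ≤ γ) (hψ : 0 ≤ ψ)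
    (ht : t ≤ T) :
    Phi a b σ ψ γ T t ≤ max ψ ((kfun a b σ γ - a) / σ ^ 2) := by
  have hDpos := phi_denom_pos (T := T) (t := t) ha hσ hb hγ hψ ht
  have hka : a < kfun a b σ γ := kfun_gt ha hσ hb hγ
  have hσ2 : (0:ℝ) < σ ^ 2 := by positivity
  have hA : 0 < (kfun a b σ γ - a) / σ ^ 2 := div_pos (by linarith) hσ2
  have hB : 0 < (a + kfun a b σ γ) / σ ^ 2 := div_pos (by linarith) hσ2
  have hE : 0 < Real.exp (-(kfun a b σ γ) * (T - t)) := Real.exp_pos _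
  have hE1 : Real.exp (-(kfun a b σ γ) * (T - t)) ≤ 1 := by
    rw [Real.exp_le_one_iff]
    nlinarith [ha.trans hka]
  obtain ⟨k, hkk⟩ : ∃ k, kfun a b σ γ = k := ⟨_, rfl⟩
  rw [hkk] at hDpos hka hA hB hE hE1
  rw [Phi, hkk, div_le_iff₀ hDpos]
  set E := Real.exp (-k * (T - t)) with hEdef
  rcases le_total ψ ((k - a) / σ ^ 2) with h | h
  · rw [max_eq_right h]
    have hid : (k - a) / σ ^ 2 * ((ψ + (a + k) / σ ^ 2) + ((k - a) / σ ^ 2 - ψ) * E) -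
        ((k - a) / σ ^ 2 * (ψ + (a + k) / σ ^ 2) +
          (a + k) / σ ^ 2 * (ψ + (a - k) / σ ^ 2) * E) =
        ((k - a) / σ ^ 2 - ψ) * ((k - a) / σ ^ 2 + (a + k) / σ ^ 2) * E := by ring
    nlinarith [mul_nonneg (mul_nonneg (sub_nonneg.2 h) (by linarith : (0:ℝ) ≤ (k - a) / σ ^ 2 + (a + k) / σ ^ 2)) hE.le]
  · rw [max_eq_left h]
    have hid : ψ * ((ψ + (a + k) / σ ^ 2) + ((k - a) / σ ^ 2 - ψ) * E) -
        ((k - a) / σ ^ 2 * (ψ + (a + k) / σ ^ 2) +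
          (a + k) / σ ^ 2 * (ψ + (a - k) / σ ^ 2) * E) =
        (ψ - (k - a) / σ ^ 2) * (ψ + (a + k) / σ ^ 2) * (1 - E) := by ring
    nlinarith [mul_nonneg (mul_nonneg (sub_nonneg.2 h) (by linarith : (0:ℝ) ≤ ψ + (a + k) / σ ^ 2)) (by linarith : (0:ℝ) ≤ 1 - E)]


/-- Lower comparison: a supersolution (with extra nonneg drain `ρ`) dominating `Phi` at the
right endpoint dominates it on the whole interval. -/
lemma lower_comparison {a b σ w s₀ s₁ T : ℝ} {u ρ : ℝ → ℝ}
    (ha : 0 < a) (hσ : 0 < σ) (hb : 0 ≤ b) (hw0 : 0 ≤ w) (hsT : s₁ ≤ T)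
    (hud : ∀ t ∈ Icc s₀ s₁, HasDerivWithinAt u
      (σ ^ 2 / 2 * (u t) ^ 2 + a * u t - 1 - ρ t) (Icc s₀ s₁) t)
    (hρ : ∀ t ∈ Icc s₀ s₁, 0 ≤ ρ t)
    (hend : Phi a b σ w 0 T s₁ ≤ u s₁) :
    ∀ t ∈ Icc s₀ s₁, Phi a b σ w 0 T t ≤ u t := by
  set P : ℝ → ℝ := fun t => Phi a b σ w 0 T t with hP
  have hPd : ∀ t ∈ Icc s₀ s₁, HasDerivAt P
      (σ ^ 2 / 2 * (P t) ^ 2 + a * P t - (1 + b * 0)) t :=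
    fun t ht => phi_hasDerivAt ha hσ hb le_rfl hw0 (ht.2.trans hsT)
  set f : ℝ → ℝ := fun t => P t - u t with hf
  have hfd : ∀ t ∈ Icc s₀ s₁, HasDerivWithinAt f
      ((σ ^ 2 / 2 * (P t) ^ 2 + a * P t - (1 + b * 0)) -
        (σ ^ 2 / 2 * (u t) ^ 2 + a * u t - 1 - ρ t)) (Icc s₀ s₁) t :=
    fun t ht => ((hPd t ht).hasDerivWithinAt).sub (hud t ht)
  have hcP : ContinuousOn P (Icc s₀ s₁) :=
    fun t ht => (hPd t ht).continuousAt.continuousWithinAt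
  have hcu : ContinuousOn u (Icc s₀ s₁) :=
    fun t ht => (hud t ht).continuousWithinAt
  have hcc : ContinuousOn (fun t => σ ^ 2 / 2 * (P t + u t) + a) (Icc s₀ s₁) :=
    (continuousOn_const.mul (hcP.add hcu)).add continuousOn_const
  obtain ⟨K, hK⟩ := isCompact_Icc.exists_bound_of_continuousOn hcc
  have key := comparison_backward (f := f)
    (f' := fun t => (σ ^ 2 / 2 * (P t) ^ 2 + a * P t - (1 + b * 0)) -
      (σ ^ 2 / 2 * (u t) ^ 2 + a * u t - 1 - ρ t)) (K := K)
    hfd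
    (fun t ht hft => by
      have hKt := hK t ht
      rw [Real.norm_eq_abs, abs_le] at hKt
      have h1 : -K * f t ≤ (σ ^ 2 / 2 * (P t + u t) + a) * f t :=
        mul_le_mul_of_nonneg_right hKt.1 hft
      have h2 := hρ t ht
      have hid : (σ ^ 2 / 2 * (P t) ^ 2 + a * P t - (1 + b * 0)) -
          (σ ^ 2 / 2 * (u t) ^ 2 + a * u t - 1 - ρ t) =
          (σ ^ 2 / 2 * (P t + u t) + a) * f t + ρ t := by
        simp only [hf]; ring
      linarith)
    (by simpa [hf] using hend)
  exact fun t ht => sub_nonpos.1 (key t ht)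

/-- Upper comparison: a subsolution lying below `ψb` at the right endpoint lies below
`Phi ψb ψb` on the whole interval. -/
lemma upper_comparison {a b σ ψb s₀ s₁ : ℝ} {u ρ : ℝ → ℝ}
    (ha : 0 < a) (hσ : 0 < σ) (hb : 0 ≤ b) (hψb : 0 ≤ ψb)
    (hud : ∀ t ∈ Icc s₀ s₁, HasDerivWithinAt u
      (σ ^ 2 / 2 * (u t) ^ 2 + a * u t - 1 - ρ t) (Icc s₀ s₁) t)
    (hρ : ∀ t ∈ Icc s₀ s₁, ρ t ≤ b * ψb)
    (hend : u s₁ ≤ ψb) :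
    ∀ t ∈ Icc s₀ s₁, u t ≤ Phi a b σ ψb ψb s₁ t := by
  set Q : ℝ → ℝ := fun t => Phi a b σ ψb ψb s₁ t with hQ
  have hQd : ∀ t ∈ Icc s₀ s₁, HasDerivAt Q
      (σ ^ 2 / 2 * (Q t) ^ 2 + a * Q t - (1 + b * ψb)) t :=
    fun t ht => phi_hasDerivAt ha hσ hb hψb hψb ht.2
  set f : ℝ → ℝ := fun t => u t - Q t with hf
  have hfd : ∀ t ∈ Icc s₀ s₁, HasDerivWithinAt f
      ((σ ^ 2 / 2 * (u t) ^ 2 + a * u t - 1 - ρ t) -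
        (σ ^ 2 / 2 * (Q t) ^ 2 + a * Q t - (1 + b * ψb))) (Icc s₀ s₁) t :=
    fun t ht => (hud t ht).sub ((hQd t ht).hasDerivWithinAt)
  have hcQ : ContinuousOn Q (Icc s₀ s₁) :=
    fun t ht => (hQd t ht).continuousAt.continuousWithinAt
  have hcu : ContinuousOn u (Icc s₀ s₁) :=
    fun t ht => (hud t ht).continuousWithinAt
  have hcc : ContinuousOn (fun t => σ ^ 2 / 2 * (u t + Q t) + a) (Icc s₀ s₁) :=
    (continuousOn_const.mul (hcu.add hcQ)).add continuousOn_const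
  obtain ⟨K, hK⟩ := isCompact_Icc.exists_bound_of_continuousOn hcc
  have key := comparison_backward (f := f)
    (f' := fun t => (σ ^ 2 / 2 * (u t) ^ 2 + a * u t - 1 - ρ t) -
      (σ ^ 2 / 2 * (Q t) ^ 2 + a * Q t - (1 + b * ψb))) (K := K)
    hfd
    (fun t ht hft => by
      have hKt := hK t ht
      rw [Real.norm_eq_abs, abs_le] at hKt
      have h1 : -K * f t ≤ (σ ^ 2 / 2 * (u t + Q t) + a) * f t :=
        mul_le_mul_of_nonneg_right hKt.1 hft
      have h2 := hρ t ht
      have hid : (σ ^ 2 / 2 * (u t) ^ 2 + a * u t - 1 - ρ t) -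
          (σ ^ 2 / 2 * (Q t) ^ 2 + a * Q t - (1 + b * ψb)) =
          (σ ^ 2 / 2 * (u t + Q t) + a) * f t + (b * ψb - ρ t) := by
        simp only [hf]; ring
      linarith)
    (by
      have hQs : Q s₁ = ψb := phi_at_T ha hσ hb hψb
      simp only [hf, hQs]
      linarith)
  exact fun t ht => sub_nonpos.1 (key t ht)

end PhiLemmas


/-- bounds for the solution of the recursive delayed Riccati system:
with w̄₀ := max((k(0)−a)/σ², c) and w̄ⱼ₊₁ := max(w̄ⱼ, (k(w̄ⱼ)−a)/σ²), for every j and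
every t ∈ [T−(j+1)τ, T−jτ],
w ≤ Φ(t,T;w,0) ≤ φⱼ(t) ≤ Φ(t,T−jτ;w̄ⱼ,w̄ⱼ) ≤ w̄ⱼ₊₁. -/
theorem delayed_riccati_bounds
    (a b σ τ T w c : ℝ) (ha : 0 < a) (hσ : 0 < σ) (hb : 0 ≤ b) (hτ : 0 < τ)
    (hw : w ∈ Set.Ico (0 : ℝ) ((kfun a b σ 0 - a) / σ ^ 2)) (hc : 0 ≤ c)
    (φ : ℕ → ℝ → ℝ) (hφ : DelayedRiccatiSol a b σ τ T w φ)
    (wbar : ℕ → ℝ)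
    (hwbar0 : wbar 0 = max ((kfun a b σ 0 - a) / σ ^ 2) c)
    (hwbar : ∀ j : ℕ, wbar (j + 1) = max (wbar j) ((kfun a b σ (wbar j) - a) / σ ^ 2)) :
    ∀ j : ℕ, ∀ t ∈ riccatiDom T τ j,
      w ≤ Phi a b σ w 0 T t ∧
      Phi a b σ w 0 T t ≤ φ j t ∧
      φ j t ≤ Phi a b σ (wbar j) (wbar j) (T - (j : ℝ) * τ) t ∧
      Phi a b σ (wbar j) (wbar j) (T - (j : ℝ) * τ) t ≤ wbar (j + 1) := by
  obtain ⟨hφ0T, hφ0d, hmatch, hφd⟩ := hφ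
  have hw0 : 0 ≤ w := hw.1
  have hwA : w < (kfun a b σ 0 - a) / σ ^ 2 := hw.2
  have hσ2 : (0:ℝ) < σ ^ 2 := by positivity
  have hA0 : 0 < (kfun a b σ 0 - a) / σ ^ 2 :=
    div_pos (sub_pos.2 (kfun_gt ha hσ hb le_rfl)) hσ2
  have hwbar_nonneg : ∀ j : ℕ, 0 ≤ wbar j := by
    intro j
    induction j with
    | zero => rw [hwbar0]; exact le_max_of_le_right hc
    | succ j ih => rw [hwbar j]; exact le_max_of_le_left ih
  intro j
  induction j with
  | zero =>
    have hdom : riccatiDom T τ 0 = Icc (T - τ) T := by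
      rw [riccatiDom]
      norm_num
    rw [hdom]
    have hlowd : ∀ s ∈ Icc (T - τ) T, HasDerivWithinAt (φ 0)
        (σ ^ 2 / 2 * (φ 0 s) ^ 2 + a * φ 0 s - 1 - (fun _ => (0:ℝ)) s) (Icc (T - τ) T) s := by
      intro s hs
      have := hφ0d s (by rw [hdom]; exact hs)
      rw [hdom] at this
      simpa using this
    have hlow : ∀ s ∈ Icc (T - τ) T, Phi a b σ w 0 T s ≤ φ 0 s := by
      apply lower_comparison ha hσ hb hw0 le_rfl hlowd
      · exact fun s _ => le_rfl
      · rw [phi_at_T ha hσ hb le_rfl, hφ0T]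
    have hw_le_wbar0 : w ≤ wbar 0 := by
      rw [hwbar0]; exact le_max_of_le_left hwA.le
    have hup : ∀ s ∈ Icc (T - τ) T, φ 0 s ≤ Phi a b σ (wbar 0) (wbar 0) T s := by
      apply upper_comparison ha hσ hb (hwbar_nonneg 0) hlowd
      · exact fun s _ => mul_nonneg hb (hwbar_nonneg 0)
      · rw [hφ0T]; exact hw_le_wbar0
    intro t ht
    have htT : t ≤ T := ht.2
    refine ⟨psi_le_phi ha hσ hb le_rfl hw0 hwA.le htT, hlow t ht, ?_, ?_⟩
    · have := hup t ht
      simpa using this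
    · have := phi_le_max (ψ := wbar 0) (γ := wbar 0) (T := T) (t := t)
        ha hσ hb (hwbar_nonneg 0) (hwbar_nonneg 0) htT
      rw [← hwbar 0] at this
      simpa using this
  | succ j ih =>
    have hjτ : (0:ℝ) ≤ (j:ℝ) * τ := mul_nonneg (Nat.cast_nonneg j) hτ.le
    set s₁ : ℝ := T - ((j:ℝ) + 1) * τ with hs₁
    set s₀ : ℝ := T - ((j:ℝ) + 2) * τ with hs₀
    have hdom : riccatiDom T τ (j + 1) = Icc s₀ s₁ := by
      rw [riccatiDom]
      congr 1 <;> push_cast <;> ring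
    have hs₁T : s₁ ≤ T := by rw [hs₁]; nlinarith
    have hs₁dom : s₁ ∈ riccatiDom T τ j := by
      rw [riccatiDom]
      constructor <;> [skip; skip] <;> rw [hs₁] <;> push_cast <;> nlinarith
    have hmem : ∀ t ∈ Icc s₀ s₁, t + τ ∈ riccatiDom T τ j := by
      intro t ht
      rw [riccatiDom]
      constructor
      · have := ht.1; rw [hs₀] at this; push_cast; linarith
      · have := ht.2; rw [hs₁] at this; push_cast; linarith
    have hderiv : ∀ s ∈ Icc s₀ s₁, HasDerivWithinAt (φ (j + 1))
        (σ ^ 2 / 2 * (φ (j + 1) s) ^ 2 + a * φ (j + 1) s - 1 -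
          (fun t => b * φ j (t + τ)) s) (Icc s₀ s₁) s := by
      intro s hs
      have := hφd j s (by rw [hdom]; exact hs)
      rw [hdom] at this
      exact this
    have hρ0 : ∀ s ∈ Icc s₀ s₁, 0 ≤ b * φ j (s + τ) := by
      intro s hs
      obtain ⟨h1, h2, _, _⟩ := ih (s + τ) (hmem s hs)
      exact mul_nonneg hb (by linarith)
    have hρb : ∀ s ∈ Icc s₀ s₁, b * φ j (s + τ) ≤ b * wbar (j + 1) := by
      intro s hs
      obtain ⟨_, _, h3, h4⟩ := ih (s + τ) (hmem s hs)
      exact mul_le_mul_of_nonneg_left (by linarith) hb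
    have hmatch' : φ (j + 1) s₁ = φ j s₁ := hmatch j
    obtain ⟨ih1, ih2, ih3, ih4⟩ := ih s₁ hs₁dom
    have hlow : ∀ s ∈ Icc s₀ s₁, Phi a b σ w 0 T s ≤ φ (j + 1) s := by
      apply lower_comparison ha hσ hb hw0 hs₁T hderiv hρ0
      rw [hmatch']
      exact ih2
    have hup : ∀ s ∈ Icc s₀ s₁, φ (j + 1) s ≤ Phi a b σ (wbar (j + 1)) (wbar (j + 1)) s₁ s := by
      apply upper_comparison ha hσ hb (hwbar_nonneg (j + 1)) hderiv hρb
      rw [hmatch']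
      linarith
    intro t ht
    rw [hdom] at ht
    have htT : t ≤ T := le_trans ht.2 hs₁T
    have hcast : T - ((j:ℕ) + 1 : ℕ) * τ = s₁ := by rw [hs₁]; push_cast; ring
    refine ⟨psi_le_phi ha hσ hb le_rfl hw0 hwA.le htT, hlow t ht, ?_, ?_⟩
    · have := hup t ht
      rw [show ((j:ℕ) + 1 : ℕ) * τ = ((j:ℝ) + 1) * τ by push_cast; ring] at *
      convert this using 3 <;> push_cast <;> ring
    · have := phi_le_max (ψ := wbar (j + 1)) (γ := wbar (j + 1)) (T := s₁) (t := t)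
        ha hσ hb (hwbar_nonneg (j + 1)) (hwbar_nonneg (j + 1)) ht.2
      rw [← hwbar (j + 1)] at this
      convert this using 3 <;> push_cast <;> ring
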